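/- Let G be a 3-edge-connected graph with DFS tree T, let v be an ancestor of u in T (u,v ≠ r), and let e be a back-edge. Then {(u,p(u)), (v,p(v)), e} is a 3-edge cut of G if and only if either B(v) = B(u) ⊔ {e} or B(u) = B(v) ⊔ {e} (disjoint unions). -/
import Mathlib


variable {V E : Type}

/-- Reachability in the multigraph with edge-endpoint map `ends`,
avoiding (i.e. after deleting) the edges in `S`. -/
def Reach (ends : E → V × V) (S : Set E) : V → V → Prop :=
  Relation.ReflTransGen (fun a b => ∃ e, e ∉ S ∧ (ends e = (a, b) ∨ ends e = (b, a)))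

/-- The multigraph is connected. -/
def Connected (ends : E → V × V) : Prop := ∀ u v : V, Reach ends ∅ u v

/-- `u` and `v` are `k`-edge-connected: no set of at most `k - 1` edges separates them. -/
def KConn (ends : E → V × V) (k : ℕ) (u v : V) : Prop :=
  ∀ S : Finset E, S.card ≤ k - 1 → Reach ends (↑S) u v

/-- The multigraph is `k`-edge-connected: no edge cut of size less than `k`. -/
def GraphKConn (ends : E → V × V) (k : ℕ) : Prop :=
  ∀ S : Finset E, S.card < k → ∀ u v : V, Reach ends (↑S) u v

/-- `S` is an edge cut: removing it disconnects the graph. -/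
def IsCutSet (ends : E → V × V) (S : Set E) : Prop :=
  ∃ u v : V, ¬ Reach ends S u v

/-- A (candidate) DFS tree on the multigraph `ends : E → V × V`: a root, a parent
function, a choice of a tree edge for each non-root vertex, and a preorder numbering. -/
structure DFSTree (V E : Type) where
  ends : E → V × V
  root : V
  parent : V → V
  treeEdge : V → E
  pre : V → ℕ

namespace DFSTree

variable (t : DFSTree V E)

/-- `t.Anc a b` : `a` is an ancestor of `b` (every vertex is an ancestor of itself). -/
def Anc (a b : V) : Prop :=
  Relation.ReflTransGen (fun x y => x ≠ t.root ∧ y = t.parent x) b a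

/-- `a` is a proper ancestor of `b`. -/
def ProperAnc (a b : V) : Prop := t.Anc a b ∧ a ≠ b

def IsTreeEdge (e : E) : Prop := ∃ v, v ≠ t.root ∧ e = t.treeEdge v

/-- The set `B(v)`: back-edges `(x, y)` with `x` a descendant of `v` and `y` a
proper ancestor of `v`. -/
def B (v : V) : Set E :=
  {e | ¬ t.IsTreeEdge e ∧ t.Anc v (t.ends e).1 ∧ t.ProperAnc (t.ends e).2 v}

/-- `m` is the nearest common ancestor of the set `S` of vertices. -/
def IsNCA (S : Set V) (m : V) : Prop :=
  (∀ x ∈ S, t.Anc m x) ∧ ∀ m' : V, (∀ x ∈ S, t.Anc m' x) → t.Anc m' m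

/-- `m = M(v)`: the nearest common ancestor of all lower ends of back-edges in `B(v)`. -/
def IsM (v m : V) : Prop := t.IsNCA {x | ∃ e ∈ t.B v, (t.ends e).1 = x} m

/-- `h = high(v)`: the highest (in preorder) upper end of a back-edge in `B(v)`. -/
def IsHigh (v h : V) : Prop :=
  (∃ e ∈ t.B v, (t.ends e).2 = h) ∧ ∀ e ∈ t.B v, t.pre (t.ends e).2 ≤ t.pre h

/-- `l = low(v)`: the lowest (in preorder) upper end of a back-edge in `B(v)`. -/
def IsLow (v l : V) : Prop :=
  (∃ e ∈ t.B v, (t.ends e).2 = l) ∧ ∀ e ∈ t.B v, t.pre l ≤ t.pre (t.ends e).2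

/-- `v` and `w` have the same `M`-value. -/
def SameM (v w : V) : Prop := ∃ m, t.IsM v m ∧ t.IsM w m

/-- `n = nextM(v)`: the greatest vertex smaller than `v` with the same `M`-value. -/
def IsNextM (v n : V) : Prop :=
  t.pre n < t.pre v ∧ t.SameM v n ∧
    ∀ z, t.pre z < t.pre v → t.SameM v z → t.pre z ≤ t.pre n

/-- `l = lastM(v)`: the smallest vertex with the same `M`-value as `v`. -/
def IsLastM (v l : V) : Prop :=
  t.SameM v l ∧ ∀ z, t.SameM v z → t.pre l ≤ t.pre z

/-- `t` really is a DFS spanning tree of the connected multigraph `ends`. -/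
structure IsDFS : Prop where
  conn : Connected t.ends
  parent_root : t.parent t.root = t.root
  tree_ends : ∀ v, v ≠ t.root → t.ends (t.treeEdge v) = (v, t.parent v)
  treeEdge_inj : ∀ v w, v ≠ t.root → w ≠ t.root → t.treeEdge v = t.treeEdge w → v = w
  back : ∀ e, ¬ t.IsTreeEdge e → t.Anc (t.ends e).2 (t.ends e).1
  pre_inj : Function.Injective t.pre
  pre_mono : ∀ a b, t.Anc a b → t.pre a ≤ t.pre b
  pre_interval : ∀ a b : V,
    t.pre a ≤ t.pre b → t.pre b < t.pre a + {x | t.Anc a x}.ncard → t.Anc a b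

end DFSTree


section AuxLemmas

private lemma rtg_functional {α : Type*} {r : α → α → Prop}
    (hr : ∀ ⦃x y z⦄, r x y → r x z → y = z) {a b c : α}
    (h1 : Relation.ReflTransGen r a b) :
    Relation.ReflTransGen r a c →
      Relation.ReflTransGen r b c ∨ Relation.ReflTransGen r c b := by
  induction h1 using Relation.ReflTransGen.head_induction_on with
  | refl => exact fun h2 => Or.inl h2
  | head hab hbd ih =>
      intro h2
      rcases h2.cases_head with h | ⟨d, had, h2'⟩
      · subst h; exact Or.inr (Relation.ReflTransGen.head hab hbd)
      · exact ih (by rwa [← hr hab had] at h2')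

private lemma no_escape {ends : E → V × V} {S : Set E} {W : Set V}
    (h : ∀ f, f ∉ S → ((ends f).1 ∈ W ↔ (ends f).2 ∈ W)) {a b : V}
    (hr : Reach ends S a b) : a ∈ W ↔ b ∈ W := by
  induction hr with
  | refl => exact Iff.rfl
  | tail _ hstep ih =>
      rcases hstep with ⟨f, hfS, hf | hf⟩
      · have h2 := h f hfS; rw [hf] at h2; exact ih.trans h2
      · have h2 := h f hfS; rw [hf] at h2; exact ih.trans h2.symm

private lemma reach_symm {ends : E → V × V} {S : Set E} {a b : V}
    (h : Reach ends S a b) : Reach ends S b a := by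
  induction h with
  | refl => exact Relation.ReflTransGen.refl
  | tail _ hstep ih =>
      refine Relation.ReflTransGen.head ?_ ih
      rcases hstep with ⟨f, h1, h2⟩
      exact ⟨f, h1, h2.symm⟩

namespace DFSTree

variable {t : DFSTree V E}

private lemma anc_refl (t : DFSTree V E) (a : V) : t.Anc a a := Relation.ReflTransGen.refl

private lemma Anc.trans' {a b c : V} (h1 : t.Anc a b) (h2 : t.Anc b c) : t.Anc a c :=
  Relation.ReflTransGen.trans h2 h1

private lemma anc_antisymm (ht : t.IsDFS) {a b : V} (h1 : t.Anc a b) (h2 : t.Anc b a) :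
    a = b :=
  ht.pre_inj (le_antisymm (ht.pre_mono a b h1) (ht.pre_mono b a h2))

private lemma anc_step {a b : V} (h : t.Anc a b) (hne : b ≠ a) :
    b ≠ t.root ∧ t.Anc a (t.parent b) := by
  rcases Relation.ReflTransGen.cases_head h with h' | ⟨c, ⟨hbr, hc⟩, h'⟩
  · exact absurd h' hne
  · subst hc; exact ⟨hbr, h'⟩

private lemma anc_root {a : V} (h : t.Anc a t.root) : a = t.root := by
  rcases Relation.ReflTransGen.cases_head h with h' | ⟨c, ⟨hbr, _⟩, _⟩
  · exact h'.symm
  · exact absurd rfl hbr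

private lemma parent_anc {a : V} (ha : a ≠ t.root) : t.Anc (t.parent a) a :=
  Relation.ReflTransGen.single ⟨ha, rfl⟩

private lemma anc_comparable (ht : t.IsDFS) {a b c : V} (h1 : t.Anc a c) (h2 : t.Anc b c) :
    t.Anc a b ∨ t.Anc b a :=
  (rtg_functional (r := fun x y => x ≠ t.root ∧ y = t.parent x)
    (fun _ _ _ hy hz => hy.2.trans hz.2.symm) h1 h2).symm

private lemma treeEdge_ne (ht : t.IsDFS) {a b : V} (ha : a ≠ t.root) (hb : b ≠ t.root)
    (hab : a ≠ b) : t.treeEdge a ≠ t.treeEdge b :=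
  fun h => hab (ht.treeEdge_inj a b ha hb h)

private lemma tree_reach (ht : t.IsDFS) {S : Set E} {w x : V} (hwx : t.Anc w x)
    (h : ∀ y, y ≠ w → t.Anc w y → t.Anc y x → t.treeEdge y ∉ S) :
    Reach t.ends S x w := by
  have key : ∀ b, Relation.ReflTransGen (fun p q => p ≠ t.root ∧ q = t.parent p) b w →
      t.Anc b x → Reach t.ends S b w := by
    intro b hb
    induction hb using Relation.ReflTransGen.head_induction_on with
    | refl => exact fun _ => Relation.ReflTransGen.refl
    | @head a c hac hcw ih =>
        intro hax
        have hcx : t.Anc c x := Relation.ReflTransGen.tail hax hac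
        by_cases haw : a = w
        · subst haw; exact Relation.ReflTransGen.refl
        · have haw' : t.Anc w a := Relation.ReflTransGen.head hac hcw
          have hS := h a haw haw' hax
          refine Relation.ReflTransGen.head ⟨t.treeEdge a, hS, Or.inl ?_⟩ (ih hcx)
          rw [ht.tree_ends a hac.1, hac.2]
  exact key x hwx (anc_refl t x)

private lemma root_anc (ht : t.IsDFS) (x : V) : t.Anc t.root x := by
  by_contra hx
  have hiff : ∀ f, f ∉ (∅ : Set E) →
      (((t.ends f).1 ∈ {z | t.Anc t.root z}) ↔ ((t.ends f).2 ∈ {z | t.Anc t.root z})) := by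
    intro f _
    by_cases hf : t.IsTreeEdge f
    · obtain ⟨z, hz, rfl⟩ := hf
      rw [ht.tree_ends z hz]
      simp only [Set.mem_setOf_eq]
      constructor
      · intro h1; exact (anc_step h1 hz).2
      · intro h1; exact h1.trans' (parent_anc hz)
    · have hb := ht.back f hf
      simp only [Set.mem_setOf_eq]
      constructor
      · intro h1
        rcases anc_comparable ht h1 hb with h2 | h2
        · exact h2
        · rw [anc_root h2]; exact anc_refl t t.root
      · intro h1; exact h1.trans' hb
  have := no_escape hiff (ht.conn x t.root)
  exact hx (this.mpr (anc_refl t t.root))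

private lemma cross_subtree (ht : t.IsDFS) {w : V} {f : E}
    (hf1 : f ≠ t.treeEdge w) (hf2 : f ∉ t.B w) :
    ((t.ends f).1 ∈ {x | t.Anc w x} ↔ (t.ends f).2 ∈ {x | t.Anc w x}) := by
  by_cases hf : t.IsTreeEdge f
  · obtain ⟨z, hz, rfl⟩ := hf
    have hzw : z ≠ w := fun h => hf1 (by rw [h])
    rw [ht.tree_ends z hz]
    simp only [Set.mem_setOf_eq]
    constructor
    · intro h1; exact (anc_step h1 hzw).2
    · intro h1; exact h1.trans' (parent_anc hz)
  · have hb := ht.back f hf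
    simp only [Set.mem_setOf_eq]
    constructor
    · intro h1
      rcases anc_comparable ht h1 hb with h2 | h2
      · exact h2
      · by_cases hyw : (t.ends f).2 = w
        · rw [hyw]; exact anc_refl t w
        · exact absurd ⟨hf, h1, h2, hyw⟩ hf2
    · intro h1; exact h1.trans' hb

private lemma cross_annulus (ht : t.IsDFS) {u v : V}
    (hanc : t.Anc v u) (huv : u ≠ v) {f : E}
    (hf1 : f ≠ t.treeEdge u) (hf2 : f ≠ t.treeEdge v)
    (h3 : f ∈ t.B u → f ∈ t.B v) (h4 : f ∈ t.B v → f ∈ t.B u) :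
    ((t.ends f).1 ∈ {x | t.Anc v x ∧ ¬ t.Anc u x} ↔
     (t.ends f).2 ∈ {x | t.Anc v x ∧ ¬ t.Anc u x}) := by
  by_cases hf : t.IsTreeEdge f
  · obtain ⟨z, hz, rfl⟩ := hf
    have hzu : z ≠ u := fun h => hf1 (by rw [h])
    have hzv : z ≠ v := fun h => hf2 (by rw [h])
    rw [ht.tree_ends z hz]
    simp only [Set.mem_setOf_eq]
    constructor
    · rintro ⟨hvz, huz⟩
      exact ⟨(anc_step hvz hzv).2, fun hc => huz (hc.trans' (parent_anc hz))⟩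
    · rintro ⟨hvp, hup⟩
      refine ⟨hvp.trans' (parent_anc hz), fun hc => hup (anc_step hc hzu).2⟩
  · have hb := ht.back f hf
    simp only [Set.mem_setOf_eq]
    constructor
    · rintro ⟨hvx, hux⟩
      rcases anc_comparable ht hvx hb with h2 | h2
      · exact ⟨h2, fun hc => hux (hc.trans' hb)⟩
      · by_cases hyv : (t.ends f).2 = v
        · subst hyv
          exact ⟨anc_refl t _, fun hc => hux (hc.trans' hb)⟩
        · have hfv : f ∈ t.B v := ⟨hf, hvx, h2, hyv⟩
          exact absurd (h4 hfv).2.1 hux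
    · rintro ⟨hvy, huy⟩
      refine ⟨hvy.trans' hb, fun hux => ?_⟩
      rcases anc_comparable ht hux hb with h2 | h2
      · exact huy h2
      · have hyu : (t.ends f).2 ≠ u := fun h => huy (h ▸ anc_refl t u)
        have hfu : f ∈ t.B u := ⟨hf, hux, h2, hyu⟩
        obtain ⟨hp1, hp2⟩ := (h3 hfu).2.2
        exact hp2 (anc_antisymm ht hp1 hvy)

end DFSTree

end AuxLemmas

open DFSTree in

/-- Let `v` be an ancestor of `u` (both `≠ r`) and `e` a back-edge. Then
`{(u, p(u)), (v, p(v)), e}` is a 3-edge cut iff `B(v) = B(u) ⊔ {e}` or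
`B(u) = B(v) ⊔ {e}` (disjoint unions). -/
theorem cut_two_tree_edges_characterization (t : DFSTree V E) (ht : t.IsDFS)
    (h3 : GraphKConn t.ends 3) (u v : V) (e : E)
    (hu : u ≠ t.root) (hv : v ≠ t.root)
    (hanc : t.Anc v u) (hback : ¬ t.IsTreeEdge e) :
    IsCutSet t.ends {t.treeEdge u, t.treeEdge v, e} ↔
      ((t.B v = insert e (t.B u) ∧ e ∉ t.B u) ∨
        (t.B u = insert e (t.B v) ∧ e ∉ t.B v)) := by
  classical
  set S : Set E := {t.treeEdge u, t.treeEdge v, e} with hS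
  by_cases huv : u = v
  · -- degenerate case u = v : both sides are false
    subst huv
    constructor
    · rintro ⟨a, b, hab⟩
      exfalso
      apply hab
      have h2 := h3 {t.treeEdge u, e}
        (lt_of_le_of_lt (Finset.card_insert_le _ _) (by simp)) a b
      have hco : (↑({t.treeEdge u, e} : Finset E) : Set E) = S := by
        rw [hS]; simp [Set.insert_idem]
      rwa [hco] at h2
    · rintro (⟨h1, h2⟩ | ⟨h1, h2⟩) <;>
        exact absurd (by rw [h1]; exact Set.mem_insert e _) h2
  · -- main case : v is a proper ancestor of u
    have hnuv : ¬ t.Anc u v := fun h => huv (anc_antisymm ht h hanc)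
    have hmemS : ∀ f : E, f ∉ S ↔ (f ≠ t.treeEdge u ∧ f ≠ t.treeEdge v ∧ f ≠ e) := by
      intro f
      rw [hS]
      simp only [Set.mem_insert_iff, Set.mem_singleton_iff, not_or]
    have B_notin_tree : ∀ f, ¬ t.IsTreeEdge f → f ∈ S → f = e := by
      intro f hf hfS
      rw [hS] at hfS
      simp only [Set.mem_insert_iff, Set.mem_singleton_iff] at hfS
      rcases hfS with h | h | h
      · exact absurd ⟨u, hu, h⟩ hf
      · exact absurd ⟨v, hv, h⟩ hf
      · exact h
    have reach_Du : ∀ x, t.Anc u x → Reach t.ends S x u := by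
      intro x hx
      refine tree_reach ht hx ?_
      intro y hyu hy1 hy2
      have hyr : y ≠ t.root := fun h => hu (anc_root (h ▸ hy1))
      have hyv : y ≠ v := fun h => huv (anc_antisymm ht (h ▸ hy1) hanc)
      exact (hmemS _).mpr ⟨treeEdge_ne ht hyr hu hyu, treeEdge_ne ht hyr hv hyv,
        fun h => hback ⟨y, hyr, h.symm⟩⟩
    have reach_A : ∀ x, t.Anc v x → ¬ t.Anc u x → Reach t.ends S x v := by
      intro x hx1 hx2
      refine tree_reach ht hx1 ?_
      intro y hyv hy1 hy2
      have hyr : y ≠ t.root := fun h => hv (anc_root (h ▸ hy1))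
      have hyu : y ≠ u := fun h => hx2 (h ▸ hy2)
      exact (hmemS _).mpr ⟨treeEdge_ne ht hyr hu hyu, treeEdge_ne ht hyr hv hyv,
        fun h => hback ⟨y, hyr, h.symm⟩⟩
    have reach_C : ∀ x, ¬ t.Anc v x → Reach t.ends S x t.root := by
      intro x hx
      refine tree_reach ht (root_anc ht x) ?_
      intro y hyr' hy1 hy2
      have hyu : y ≠ u := fun h => hx (hanc.trans' (h ▸ hy2))
      have hyv : y ≠ v := fun h => hx (h ▸ hy2)
      exact (hmemS _).mpr ⟨treeEdge_ne ht hyr' hu hyu, treeEdge_ne ht hyr' hv hyv,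
        fun h => hback ⟨y, hyr', h.symm⟩⟩
    have hvA : v ∈ {x | t.Anc v x ∧ ¬ t.Anc u x} := ⟨anc_refl t v, hnuv⟩
    constructor
    · rintro ⟨a, b, hab⟩
      -- connector lemmas
      have E1 : ∀ f, f ∉ S → f ∈ t.B u → f ∉ t.B v → Reach t.ends S u v := by
        intro f hfS hfu hfv
        obtain ⟨hfnt, hfx, hfy1, hfy2⟩ := hfu
        have hxu : Reach t.ends S (t.ends f).1 u := reach_Du _ hfx
        rcases anc_comparable ht hanc hfy1 with hvy | hyv'
        · have huy : ¬ t.Anc u (t.ends f).2 := fun h => hfy2 (anc_antisymm ht hfy1 h)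
          exact ((reach_symm hxu).tail ⟨f, hfS, Or.inl Prod.mk.eta.symm⟩).trans
            (reach_A _ hvy huy)
        · by_cases hyv : (t.ends f).2 = v
          · have h2 := (reach_symm hxu).tail
              (⟨f, hfS, Or.inl Prod.mk.eta.symm⟩ :
                ∃ g, g ∉ S ∧ (t.ends g = ((t.ends f).1, (t.ends f).2) ∨
                  t.ends g = ((t.ends f).2, (t.ends f).1)))
            rwa [hyv] at h2
          · exact absurd ⟨hfnt, hanc.trans' hfx, hyv', hyv⟩ hfv
      have E2 : ∀ f, f ∉ S → f ∈ t.B u → f ∈ t.B v → Reach t.ends S u t.root := by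
        intro f hfS hfu hfv
        obtain ⟨_, hfx, _⟩ := hfu
        obtain ⟨_, _, hfy1, hfy2⟩ := hfv
        have hyC : ¬ t.Anc v (t.ends f).2 := fun h => hfy2 (anc_antisymm ht hfy1 h)
        exact ((reach_symm (reach_Du _ hfx)).tail ⟨f, hfS, Or.inl Prod.mk.eta.symm⟩).trans
          (reach_C _ hyC)
      have E3 : ∀ f, f ∉ S → f ∈ t.B v → f ∉ t.B u → Reach t.ends S v t.root := by
        intro f hfS hfv hfu
        obtain ⟨hfnt, hfx, hfy1, hfy2⟩ := hfv
        have hyu : (t.ends f).2 ≠ u := fun h => huv (anc_antisymm ht (h ▸ hfy1) hanc)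
        have hxA : ¬ t.Anc u (t.ends f).1 := fun h => hfu ⟨hfnt, h, hfy1.trans' hanc, hyu⟩
        have hyC : ¬ t.Anc v (t.ends f).2 := fun h => hfy2 (anc_antisymm ht hfy1 h)
        exact ((reach_symm (reach_A _ hfx hxA)).tail ⟨f, hfS, Or.inl Prod.mk.eta.symm⟩).trans
          (reach_C _ hyC)
      -- every vertex reaches one of u, v, root
      have rep : ∀ x : V, Reach t.ends S x u ∨ Reach t.ends S x v ∨
          Reach t.ends S x t.root := by
        intro x
        by_cases h1 : t.Anc u x
        · exact Or.inl (reach_Du x h1)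
        · by_cases h2 : t.Anc v x
          · exact Or.inr (Or.inl (reach_A x h2 h1))
          · exact Or.inr (Or.inr (reach_C x h2))
      have main : ¬ Reach t.ends S u v ∨ ¬ Reach t.ends S u t.root ∨
          ¬ Reach t.ends S v t.root := by
        by_contra hcon
        push_neg at hcon
        obtain ⟨r1, r2, r3⟩ := hcon
        apply hab
        rcases rep a with ha | ha | ha <;> rcases rep b with hb | hb | hb
        · exact ha.trans (reach_symm hb)
        · exact ha.trans (r1.trans (reach_symm hb))
        · exact ha.trans (r2.trans (reach_symm hb))
        · exact ha.trans ((reach_symm r1).trans (reach_symm hb))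
        · exact ha.trans (reach_symm hb)
        · exact ha.trans (r3.trans (reach_symm hb))
        · exact ha.trans ((reach_symm r2).trans (reach_symm hb))
        · exact ha.trans ((reach_symm r3).trans (reach_symm hb))
        · exact ha.trans (reach_symm hb)
      have K1 : ¬ Reach t.ends S u v → t.B u \ t.B v ⊆ {e} := by
        intro hR f hf
        obtain ⟨hfu, hfv⟩ := hf
        by_contra hfe
        have hfS : f ∉ S := fun h => hfe (B_notin_tree f hfu.1 h)
        exact hR (E1 f hfS hfu hfv)
      have K2 : ¬ Reach t.ends S u t.root → t.B u ∩ t.B v ⊆ {e} := by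
        intro hR f hf
        obtain ⟨hfu, hfv⟩ := hf
        by_contra hfe
        have hfS : f ∉ S := fun h => hfe (B_notin_tree f hfu.1 h)
        exact hR (E2 f hfS hfu hfv)
      have K3 : ¬ Reach t.ends S v t.root → t.B v \ t.B u ⊆ {e} := by
        intro hR f hf
        obtain ⟨hfv, hfu⟩ := hf
        by_contra hfe
        have hfS : f ∉ S := fun h => hfe (B_notin_tree f hfv.1 h)
        exact hR (E3 f hfS hfv hfu)
      have htwo : (t.B u \ t.B v ⊆ {e} ∧ t.B u ∩ t.B v ⊆ {e}) ∨
          (t.B u \ t.B v ⊆ {e} ∧ t.B v \ t.B u ⊆ {e}) ∨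
          (t.B u ∩ t.B v ⊆ {e} ∧ t.B v \ t.B u ⊆ {e}) := by
        rcases main with h | h | h
        · by_cases h2 : Reach t.ends S u t.root
          · have h3' : ¬ Reach t.ends S v t.root := fun hr => h (h2.trans (reach_symm hr))
            exact Or.inr (Or.inl ⟨K1 h, K3 h3'⟩)
          · exact Or.inl ⟨K1 h, K2 h2⟩
        · by_cases h2 : Reach t.ends S u v
          · have h3' : ¬ Reach t.ends S v t.root := fun hr => h (h2.trans hr)
            exact Or.inr (Or.inr ⟨K2 h, K3 h3'⟩)
          · exact Or.inl ⟨K1 h2, K2 h⟩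
        · by_cases h2 : Reach t.ends S u v
          · have h2' : ¬ Reach t.ends S u t.root := fun hr => h ((reach_symm h2).trans hr)
            exact Or.inr (Or.inr ⟨K2 h2', K3 h⟩)
          · exact Or.inr (Or.inl ⟨K1 h2, K3 h⟩)
      -- the subtree below w cannot have boundary {treeEdge w, e}
      have noB : ∀ w : V, w ≠ t.root → ¬ (t.B w ⊆ {e}) := by
        intro w hw hsub
        have hreach := h3 {t.treeEdge w, e}
          (lt_of_le_of_lt (Finset.card_insert_le _ _) (by simp)) w t.root
        have hiff : w ∈ {x | t.Anc w x} ↔ t.root ∈ {x | t.Anc w x} := by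
          refine no_escape ?_ hreach
          intro f hf
          simp only [Finset.coe_insert, Finset.coe_singleton, Set.mem_insert_iff,
            Set.mem_singleton_iff, not_or] at hf
          exact cross_subtree ht hf.1 (fun h => hf.2 (hsub h))
        exact hw (anc_root (hiff.mp (anc_refl t w)))
      -- B u = B v is impossible
      have noEq : t.B u ≠ t.B v := by
        intro hEq
        have hreach := h3 {t.treeEdge u, t.treeEdge v}
          (lt_of_le_of_lt (Finset.card_insert_le _ _) (by simp)) v t.root
        have hiff : v ∈ {x | t.Anc v x ∧ ¬ t.Anc u x} ↔
            t.root ∈ {x | t.Anc v x ∧ ¬ t.Anc u x} := by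
          refine no_escape ?_ hreach
          intro f hf
          simp only [Finset.coe_insert, Finset.coe_singleton, Set.mem_insert_iff,
            Set.mem_singleton_iff, not_or] at hf
          exact cross_annulus ht hanc huv hf.1 hf.2
            (fun hh => by rw [← hEq]; exact hh) (fun hh => by rw [hEq]; exact hh)
        exact hv (anc_root (hiff.mp hvA).1)
      rcases htwo with ⟨hA, hB⟩ | ⟨hA, hB⟩ | ⟨hA, hB⟩
      · refine absurd ?_ (noB u hu)
        intro f hf
        by_cases h : f ∈ t.B v
        · exact hB ⟨hf, h⟩
        · exact hA ⟨hf, h⟩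
      · by_cases heu : e ∈ t.B u <;> by_cases hev : e ∈ t.B v
        · exfalso
          apply noEq
          refine Set.Subset.antisymm (fun f hf => ?_) (fun f hf => ?_)
          · by_cases h : f ∈ t.B v
            · exact h
            · have hfe : f = e := hA ⟨hf, h⟩
              subst hfe; exact absurd hev h
          · by_cases h : f ∈ t.B u
            · exact h
            · have hfe : f = e := hB ⟨hf, h⟩
              subst hfe; exact absurd heu h
        · refine Or.inr ⟨?_, hev⟩
          refine Set.Subset.antisymm (fun f hf => ?_) (fun f hf => ?_)
          · by_cases h : f ∈ t.B v
            · exact Set.mem_insert_of_mem _ h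
            · exact Set.mem_insert_iff.mpr (Or.inl (hA ⟨hf, h⟩))
          · rcases Set.mem_insert_iff.mp hf with rfl | hf'
            · exact heu
            · by_cases h : f ∈ t.B u
              · exact h
              · have hfe : f = e := hB ⟨hf', h⟩
                subst hfe; exact absurd hf' hev
        · refine Or.inl ⟨?_, heu⟩
          refine Set.Subset.antisymm (fun f hf => ?_) (fun f hf => ?_)
          · by_cases h : f ∈ t.B u
            · exact Set.mem_insert_of_mem _ h
            · exact Set.mem_insert_iff.mpr (Or.inl (hB ⟨hf, h⟩))
          · rcases Set.mem_insert_iff.mp hf with rfl | hf'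
            · exact hev
            · by_cases h : f ∈ t.B v
              · exact h
              · have hfe : f = e := hA ⟨hf', h⟩
                subst hfe; exact absurd hf' heu
        · exfalso
          apply noEq
          refine Set.Subset.antisymm (fun f hf => ?_) (fun f hf => ?_)
          · by_cases h : f ∈ t.B v
            · exact h
            · have hfe : f = e := hA ⟨hf, h⟩
              subst hfe; exact absurd hf heu
          · by_cases h : f ∈ t.B u
            · exact h
            · have hfe : f = e := hB ⟨hf, h⟩
              subst hfe; exact absurd hf hev
      · refine absurd ?_ (noB v hv)
        intro f hf
        by_cases h : f ∈ t.B u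
        · exact hA ⟨h, hf⟩
        · exact hB ⟨hf, h⟩
    · -- backward direction
      intro hside
      refine ⟨v, t.root, fun hreach => ?_⟩
      have hiff : v ∈ {x | t.Anc v x ∧ ¬ t.Anc u x} ↔
          t.root ∈ {x | t.Anc v x ∧ ¬ t.Anc u x} := by
        refine no_escape ?_ hreach
        intro f hf
        obtain ⟨hf1, hf2, hf3⟩ := (hmemS f).mp hf
        rcases hside with ⟨hBv, he⟩ | ⟨hBu, he⟩
        · refine cross_annulus ht hanc huv hf1 hf2 (fun hh => ?_) (fun hh => ?_)
          · rw [hBv]; exact Set.mem_insert_of_mem _ hh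
          · rw [hBv] at hh
            rcases Set.mem_insert_iff.mp hh with h | h
            · exact absurd h hf3
            · exact h
        · refine cross_annulus ht hanc huv hf1 hf2 (fun hh => ?_) (fun hh => ?_)
          · rw [hBu] at hh
            rcases Set.mem_insert_iff.mp hh with h | h
            · exact absurd h hf3
            · exact h
          · rw [hBu]; exact Set.mem_insert_of_mem _ hh
      exact hv (anc_root (hiff.mp hvA).1)
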